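/- For each nonzero x ∈ ℝⁿ there exists a unique s ∈ ℝ such that ‖d(-s)x‖ = 1, where d is a strictly monotone continuous linear dilation; hence the canonical homogeneous norm ‖x‖_d = e^s is well-defined. -/

import Mathlib

open Matrix NormedSpace

noncomputable def dil {n : ℕ} (G : Matrix (Fin n) (Fin n) ℝ) (s : ℝ) :
    Matrix (Fin n) (Fin n) ℝ :=
  NormedSpace.exp (s • G)

noncomputable def wnorm {n : ℕ} (P : Matrix (Fin n) (Fin n) ℝ) (x : Fin n → ℝ) : ℝ :=
  Real.sqrt (x ⬝ᵥ P.mulVec x)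

private lemma quad_continuous {n : ℕ} (Q : Matrix (Fin n) (Fin n) ℝ) :
    Continuous (fun y : Fin n → ℝ => y ⬝ᵥ Q *ᵥ y) := by
  simp only [dotProduct, Matrix.mulVec]
  exact continuous_finset_sum _ fun i _ => (continuous_apply i).mul
    (continuous_finset_sum _ fun j _ => continuous_const.mul (continuous_apply j))

private lemma quad_smul {n : ℕ} (Q : Matrix (Fin n) (Fin n) ℝ) (c : ℝ) (y : Fin n → ℝ) :
    (c • y) ⬝ᵥ Q *ᵥ (c • y) = c ^ 2 * (y ⬝ᵥ Q *ᵥ y) := by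
  rw [Matrix.mulVec_smul, smul_dotProduct, dotProduct_smul]
  simp [smul_eq_mul]; ring

private lemma quad_sym {n : ℕ} (G P : Matrix (Fin n) (Fin n) ℝ) (y : Fin n → ℝ) :
    (G *ᵥ y) ⬝ᵥ (P *ᵥ y) = y ⬝ᵥ ((Gᵀ * P) *ᵥ y) := by
  rw [← Matrix.mulVec_mulVec, Matrix.dotProduct_mulVec y Gᵀ, Matrix.vecMul_transpose]

private lemma quad_compare {n : ℕ} {P Q : Matrix (Fin n) (Fin n) ℝ} (hP : P.PosDef)
    (hQ : Q.PosDef) (x : Fin n → ℝ) (hx : x ≠ 0) :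
    ∃ ε > (0:ℝ), ∀ y : Fin n → ℝ, y ≠ 0 → ε * (y ⬝ᵥ P *ᵥ y) ≤ y ⬝ᵥ Q *ᵥ y := by
  classical
  have hxs : ‖x‖ ≠ 0 := norm_ne_zero_iff.mpr hx
  have hu : (‖x‖⁻¹ • x) ∈ Metric.sphere (0 : Fin n → ℝ) 1 := by
    simp [norm_smul, abs_of_nonneg (inv_nonneg.mpr (norm_nonneg x)),
      inv_mul_cancel₀ hxs]
  have hcomp : IsCompact (Metric.sphere (0 : Fin n → ℝ) 1) := isCompact_sphere 0 1
  obtain ⟨yQ, hyQmem, hyQmin⟩ := hcomp.exists_isMinOn ⟨_, hu⟩ ((quad_continuous Q).continuousOn)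
  obtain ⟨yP, hyPmem, hyPmax⟩ := hcomp.exists_isMaxOn ⟨_, hu⟩ ((quad_continuous P).continuousOn)
  have hyQne : yQ ≠ 0 := by
    intro h; rw [h] at hyQmem; simp at hyQmem
  have hyPne : yP ≠ 0 := by
    intro h; rw [h] at hyPmem; simp at hyPmem
  have hmQ : 0 < yQ ⬝ᵥ Q *ᵥ yQ := by simpa using hQ.dotProduct_mulVec_pos hyQne
  have hMP : 0 < yP ⬝ᵥ P *ᵥ yP := by simpa using hP.dotProduct_mulVec_pos hyPne
  refine ⟨(yQ ⬝ᵥ Q *ᵥ yQ) / (yP ⬝ᵥ P *ᵥ yP), div_pos hmQ hMP, ?_⟩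
  intro y hy
  have hys : ‖y‖ ≠ 0 := norm_ne_zero_iff.mpr hy
  have huy : (‖y‖⁻¹ • y) ∈ Metric.sphere (0 : Fin n → ℝ) 1 := by
    simp [norm_smul, abs_of_nonneg (inv_nonneg.mpr (norm_nonneg y)),
      inv_mul_cancel₀ hys]
  have h1 : yQ ⬝ᵥ Q *ᵥ yQ ≤ (‖y‖⁻¹ • y) ⬝ᵥ Q *ᵥ (‖y‖⁻¹ • y) := hyQmin huy
  have h2 : (‖y‖⁻¹ • y) ⬝ᵥ P *ᵥ (‖y‖⁻¹ • y) ≤ yP ⬝ᵥ P *ᵥ yP := hyPmax huy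
  rw [quad_smul] at h1 h2
  have hc : (0:ℝ) < (‖y‖⁻¹) ^ 2 := by positivity
  rw [div_mul_eq_mul_div, div_le_iff₀ hMP]
  calc (yQ ⬝ᵥ Q *ᵥ yQ) * (y ⬝ᵥ P *ᵥ y)
      ≤ ((‖y‖⁻¹) ^ 2 * (y ⬝ᵥ Q *ᵥ y)) * (y ⬝ᵥ P *ᵥ y) := by
        apply mul_le_mul_of_nonneg_right h1
        have := hP.posSemidef.dotProduct_mulVec_nonneg y
        simpa using this
    _ = (y ⬝ᵥ Q *ᵥ y) * ((‖y‖⁻¹) ^ 2 * (y ⬝ᵥ P *ᵥ y)) := by ring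
    _ ≤ (y ⬝ᵥ Q *ᵥ y) * (yP ⬝ᵥ P *ᵥ yP) := by
        apply mul_le_mul_of_nonneg_left h2
        have := hQ.posSemidef.dotProduct_mulVec_nonneg y
        simpa using this

private lemma hasDerivAt_quad {n : ℕ} (Q : Matrix (Fin n) (Fin n) ℝ) {u : ℝ → Fin n → ℝ}
    {u' : Fin n → ℝ} {s : ℝ} (hu : HasDerivAt u u' s) :
    HasDerivAt (fun t => u t ⬝ᵥ Q *ᵥ u t) (u' ⬝ᵥ Q *ᵥ u s + u s ⬝ᵥ Q *ᵥ u') s := by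
  have hui : ∀ i, HasDerivAt (fun t => u t i) (u' i) s := fun i =>
    (ContinuousLinearMap.proj (R := ℝ) (φ := fun _ : Fin n => ℝ) i).hasFDerivAt.comp_hasDerivAt s hu
  have key : HasDerivAt (fun t => ∑ i, u t i * ∑ j, Q i j * u t j)
      (∑ i, (u' i * ∑ j, Q i j * u s j + u s i * ∑ j, Q i j * u' j)) s := by
    apply HasDerivAt.fun_sum
    intro i _
    exact (hui i).mul (HasDerivAt.fun_sum fun j _ => (hui j).const_mul (Q i j))
  have : (fun t => u t ⬝ᵥ Q *ᵥ u t) = fun t => ∑ i, u t i * ∑ j, Q i j * u t j := by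
    funext t; simp [dotProduct, Matrix.mulVec]
  rw [this]
  convert key using 1
  simp [dotProduct, Matrix.mulVec, Finset.sum_add_distrib]

/-- for a strictly monotone continuous linear dilation (P ≻ 0, PG + GᵀP ≻ 0),
for each nonzero `x` there is a unique `s ∈ ℝ` with `‖d(-s)x‖ = 1`; hence the canonical
homogeneous norm `‖x‖_d = e^s` is well defined. -/
theorem stmt3 {n : ℕ} (P G : Matrix (Fin n) (Fin n) ℝ) (hP : P.PosDef)
    (hmon : (P * G + Gᵀ * P).PosDef) :
    ∀ x : Fin n → ℝ, x ≠ 0 → ∃! s : ℝ, wnorm P (dil G (-s) *ᵥ x) = 1 := by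
  intro x hx
  classical
  letI : SeminormedRing (Matrix (Fin n) (Fin n) ℝ) := Matrix.linftyOpSemiNormedRing
  letI : NormedRing (Matrix (Fin n) (Fin n) ℝ) := Matrix.linftyOpNormedRing
  letI : NormedAlgebra ℝ (Matrix (Fin n) (Fin n) ℝ) := Matrix.linftyOpNormedAlgebra
  haveI : CompleteSpace (Matrix (Fin n) (Fin n) ℝ) := FiniteDimensional.complete ℝ _
  set Q : Matrix (Fin n) (Fin n) ℝ := P * G + Gᵀ * P with hQdef
  set y : ℝ → Fin n → ℝ := fun s => dil G (-s) *ᵥ x with hydef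
  set V : ℝ → ℝ := fun s => y s ⬝ᵥ P *ᵥ y s with hVdef
  -- invertibility: y s ≠ 0
  have hdinv : ∀ s : ℝ, dil G s * dil G (-s) = 1 := by
    intro s
    have hc : Commute (s • G) ((-s) • G) :=
      ((Commute.refl G).smul_left s).smul_right (-s)
    rw [dil, dil, ← Matrix.exp_add_of_commute _ _ hc, ← add_smul]
    simp [NormedSpace.exp_zero]
  have hyne : ∀ s : ℝ, y s ≠ 0 := by
    intro s h
    apply hx
    have h2 : dil G s *ᵥ (dil G (-s) *ᵥ x) = 0 := by
      have hrfl : y s = dil G (-s) *ᵥ x := rfl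
      rw [← hrfl, h, Matrix.mulVec_zero]
    rwa [Matrix.mulVec_mulVec, hdinv s, Matrix.one_mulVec] at h2
  -- the linear map M ↦ M *ᵥ x as a continuous linear map
  let mulx : Matrix (Fin n) (Fin n) ℝ →ₗ[ℝ] (Fin n → ℝ) :=
    { toFun := fun M => M *ᵥ x
      map_add' := fun A B => Matrix.add_mulVec A B x
      map_smul' := fun c A => Matrix.smul_mulVec c A x }
  let L : Matrix (Fin n) (Fin n) ℝ →L[ℝ] (Fin n → ℝ) := LinearMap.toContinuousLinearMap mulx
  -- derivative of y
  have hy' : ∀ s : ℝ, HasDerivAt y (-(G *ᵥ y s)) s := by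
    intro s
    have h1 : HasDerivAt (fun u : ℝ => exp (u • G)) (G * exp ((-s) • G)) (-s) :=
      hasDerivAt_exp_smul_const' G (-s)
    have h2 : HasDerivAt (fun t : ℝ => -t) (-1) s := (hasDerivAt_id s).neg
    have h3 : HasDerivAt (fun t : ℝ => exp ((-t) • G))
        ((-1 : ℝ) • (G * exp ((-s) • G))) s := h1.scomp s h2
    have h4 := L.hasFDerivAt.comp_hasDerivAt s h3
    have h5 : HasDerivAt y (L ((-1 : ℝ) • (G * exp ((-s) • G)))) s :=
      h4.congr_of_eventuallyEq (Filter.Eventually.of_forall fun t => rfl)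
    have hval : L ((-1 : ℝ) • (G * exp ((-s) • G))) = -(G *ᵥ y s) := by
      show ((-1 : ℝ) • (G * exp ((-s) • G))) *ᵥ x = -(G *ᵥ y s)
      rw [neg_one_smul, Matrix.neg_mulVec, ← Matrix.mulVec_mulVec]
      rfl
    rwa [hval] at h5
  -- derivative of V
  have hV' : ∀ s : ℝ, HasDerivAt V (-(y s ⬝ᵥ Q *ᵥ y s)) s := by
    intro s
    have h := hasDerivAt_quad P (hy' s)
    convert h using 1
    have e1 : (-(G *ᵥ y s)) ⬝ᵥ (P *ᵥ y s) = -(y s ⬝ᵥ ((Gᵀ * P) *ᵥ y s)) := by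
      rw [neg_dotProduct, quad_sym]
    have e2 : y s ⬝ᵥ (P *ᵥ (-(G *ᵥ y s))) = -(y s ⬝ᵥ ((P * G) *ᵥ y s)) := by
      rw [Matrix.mulVec_neg, dotProduct_neg, Matrix.mulVec_mulVec]
    rw [e1, e2, hQdef, Matrix.add_mulVec, dotProduct_add]
    ring
  -- positivity of V and of the dissipation
  have hVpos : ∀ s : ℝ, 0 < V s := fun s => by simpa using hP.dotProduct_mulVec_pos (hyne s)
  have hQpos : ∀ s : ℝ, 0 < y s ⬝ᵥ Q *ᵥ y s := fun s => by simpa using hmon.dotProduct_mulVec_pos (hyne s)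
  -- strict monotonicity of V
  have hVanti : StrictAnti V := by
    apply strictAnti_of_deriv_neg
    intro s
    rw [(hV' s).deriv]
    exact neg_lt_zero.mpr (hQpos s)
  -- comparison constant
  obtain ⟨ε, hε, hcomp⟩ := quad_compare hP hmon x hx
  set W : ℝ → ℝ := fun s => Real.log (V s) with hWdef
  have hW' : ∀ s, HasDerivAt W (-(y s ⬝ᵥ Q *ᵥ y s) / V s) s := fun s =>
    (hV' s).log (ne_of_gt (hVpos s))
  have hh' : ∀ s, HasDerivAt (fun t => W t + ε * t) (-(y s ⬝ᵥ Q *ᵥ y s) / V s + ε) s := by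
    intro s
    have h : HasDerivAt (fun t => W t + ε * t) _ s := (hW' s).add ((hasDerivAt_id s).const_mul ε)
    simpa using h
  have hder_nonpos : ∀ s, -(y s ⬝ᵥ Q *ᵥ y s) / V s + ε ≤ 0 := by
    intro s
    have h1 : ε * V s ≤ y s ⬝ᵥ Q *ᵥ y s := hcomp (y s) (hyne s)
    have h2 : -(y s ⬝ᵥ Q *ᵥ y s) / V s ≤ -ε := by
      rw [div_le_iff₀ (hVpos s)]; nlinarith
    linarith
  have hanti : Antitone (fun t => W t + ε * t) := by
    apply antitone_of_deriv_nonpos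
    · intro s; exact (hh' s).differentiableAt
    · intro s; rw [(hh' s).deriv]; exact hder_nonpos s
  set a : ℝ := min (W 0 / ε - 1) 0 with hadef
  set b : ℝ := max (W 0 / ε + 1) 0 with hbdef
  have hab : a ≤ b := le_trans (min_le_right _ _) (le_max_right _ _)
  have hWa : ε ≤ W a := by
    have h1 : W 0 + ε * 0 ≤ W a + ε * a := hanti (min_le_right _ _)
    have h4 : ε * a ≤ W 0 - ε := by
      have h5 : a ≤ W 0 / ε - 1 := min_le_left _ _
      have h2 : ε * a ≤ ε * (W 0 / ε - 1) := mul_le_mul_of_nonneg_left h5 hε.le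
      have h3 : ε * (W 0 / ε - 1) = W 0 - ε := by field_simp
      linarith
    linarith
  have hWb : W b ≤ -ε := by
    have h1 : W b + ε * b ≤ W 0 + ε * 0 := hanti (le_max_right _ _)
    have h4 : W 0 + ε ≤ ε * b := by
      have h5 : W 0 / ε + 1 ≤ b := le_max_left _ _
      have h2 : ε * (W 0 / ε + 1) ≤ ε * b := mul_le_mul_of_nonneg_left h5 hε.le
      have h3 : ε * (W 0 / ε + 1) = W 0 + ε := by field_simp
      linarith
    linarith
  have hVa : 1 < V a := by
    have h0 : 0 < W a := lt_of_lt_of_le hε hWa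
    exact (Real.log_pos_iff (hVpos a).le).mp h0
  have hVb : V b < 1 := by
    have h0 : W b < 0 := lt_of_le_of_lt hWb (neg_neg_of_pos hε)
    exact (Real.log_neg_iff (hVpos b)).mp h0
  have hVcont : ContinuousOn V (Set.Icc a b) := fun s _ =>
    ((hV' s).differentiableAt.continuousAt.continuousWithinAt)
  have h1mem : (1:ℝ) ∈ Set.Icc (V b) (V a) := ⟨hVb.le, hVa.le⟩
  obtain ⟨s₀, _, hVs₀⟩ := intermediate_value_Icc' hab hVcont h1mem
  have key : ∀ s : ℝ, wnorm P (dil G (-s) *ᵥ x) = 1 ↔ V s = 1 := by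
    intro s
    have hre : wnorm P (dil G (-s) *ᵥ x) = Real.sqrt (V s) := rfl
    rw [hre, Real.sqrt_eq_one]
  refine ⟨s₀, (key s₀).mpr hVs₀, ?_⟩
  intro t ht
  exact hVanti.injective (((key t).mp ht).trans hVs₀.symm)
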